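/- If an initial configuration contains two distinct agents with identical enhanced views, and all agents are woken simultaneously and execute the same deterministic algorithm, then no agent ever meets any of its homologs (agents whose enhanced view equals its own); hence the configuration is not gatherable. -/
import Mathlib


/-- A port-labeled graph on vertex type `V`: each node `v` has degree `deg v`, and
`next v p` gives, for a port `p < deg v`, the node reached by leaving `v` through
port `p` together with the entry port at that node (and `none` for invalid ports). -/
structure PGraph (V : Type) where
  deg : V → ℕ
  next : V → ℕ → Option (V × ℕ)

namespace PGraph

variable {V : Type}

/-- Observation along a port sequence: the list of entry ports encountered and the
degree of the node finally reached (`none` if the port sequence is invalid).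
The (infinite) view from a node is exactly the function `fun q => obs G v q`. -/
def obs (G : PGraph V) : V → List ℕ → Option (List ℕ × ℕ)
  | v, [] => some ([], G.deg v)
  | v, p :: q =>
    match G.next v p with
    | some (w, e) => (obs G w q).map fun r => (e :: r.1, r.2)
    | none => none

/-- Colored observation: additionally records the color of the reached node. -/
def cobs {C : Type} (G : PGraph V) (col : V → C) : V → List ℕ → Option (List ℕ × ℕ × C)
  | v, [] => some ([], G.deg v, col v)
  | v, p :: q =>
    match G.next v p with
    | some (w, e) => (cobs G col w q).map fun r => (e :: r.1, r.2)
    | none => none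

/-- Two nodes have equal views iff they give the same observation along every port
sequence. -/
def SameView (G : PGraph V) (v w : V) : Prop := ∀ q : List ℕ, G.obs v q = G.obs w q

/-- Equality of enhanced views (views with occupied nodes marked by `occ`). -/
def SameEView (G : PGraph V) (occ : V → Bool) (v w : V) : Prop :=
  ∀ q : List ℕ, G.cobs occ v q = G.cobs occ w q

/-- Equality of colored views, for an arbitrary coloring of the nodes. -/
def SameCView {C : Type} (G : PGraph V) (col : V → C) (v w : V) : Prop :=
  ∀ q : List ℕ, G.cobs col v q = G.cobs col w q

/-- The node reached by following a port sequence. -/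
def run (G : PGraph V) : V → List ℕ → Option V
  | v, [] => some v
  | v, p :: q =>
    match G.next v p with
    | some (w, _) => run G w q
    | none => none

def Connected (G : PGraph V) : Prop := ∀ v w : V, ∃ q : List ℕ, G.run v q = some w

/-- Well-formedness: ports `0,…,deg v - 1` are exactly the valid ports, entry ports are
valid ports of the target node, and the edge taken backwards by the entry port leads back. -/
def WellFormed (G : PGraph V) : Prop :=
  (∀ v p, (G.next v p).isSome ↔ p < G.deg v) ∧
  ∀ v p w e, G.next v p = some (w, e) → e < G.deg w ∧ G.next w e = some (v, p)

end PGraph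

/-- A deterministic algorithm for anonymous agents, with (abstract) memory type `M`.
`init d` is the memory of a freshly woken agent seeing that its node has degree `d`;
`upd m d mv S` is the new memory given the old memory `m`, the degree `d` of the current
node, the exit/entry ports `mv` of the move just performed (`none` if the agent stayed),
and the set `S` of memories of the other agents met at the current node;
`out m` is the move chosen: leave by port `p` (`some p`) or stay idle (`none`). -/
structure Algo (M : Type) where
  init : ℕ → M
  upd : M → ℕ → Option (ℕ × ℕ) → Set M → M
  out : M → Option ℕ

/-- Effect of a chosen move at node `v`: the resulting node together with the
(exit, entry) ports of the traversed edge (`none` if the agent stays put). -/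
def moveOf {V : Type} (G : PGraph V) (v : V) : Option ℕ → V × Option (ℕ × ℕ)
  | none => (v, none)
  | some p =>
    match G.next v p with
    | some (w, e) => (w, some (p, e))
    | none => (v, none)

/-- A synchronous execution, with simultaneous wake-up in round `0`, of the
deterministic algorithm `alg` by anonymous agents indexed by `A`, starting at the
distinct nodes `start a`.  `pos a t` / `mem a t` are the position / memory of agent `a`
at the end of round `t`. -/
structure Run {V A M : Type} (G : PGraph V) (start : A → V) (alg : Algo M) where
  startInj : Function.Injective start
  pos : A → ℕ → V
  mem : A → ℕ → M
  pos_zero : ∀ a, pos a 0 = start a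
  mem_zero : ∀ a, mem a 0 = alg.init (G.deg (start a))
  step_pos : ∀ a t, pos a (t + 1) = (moveOf G (pos a t) (alg.out (mem a t))).1
  step_mem : ∀ a t, mem a (t + 1) =
    alg.upd (mem a t) (G.deg (pos a (t + 1)))
      (moveOf G (pos a t) (alg.out (mem a t))).2
      { m : M | ∃ b : A, b ≠ a ∧ pos b (t + 1) = pos a (t + 1) ∧ mem b t = m }

namespace PGraph

variable {V C : Type} (G : PGraph V) (col : V → C)

theorem run_append : ∀ (q q' : List ℕ) (v : V),
    G.run v (q ++ q') = (G.run v q).bind (fun u => G.run u q')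
  | [], q', v => by simp [run]
  | p :: q, q', v => by
    simp only [List.cons_append, run]
    cases h : G.next v p with
    | none => rfl
    | some we => exact run_append q q' we.1

theorem cobs_isSome_iff : ∀ (q : List ℕ) (v : V),
    (G.cobs col v q).isSome ↔ (G.run v q).isSome
  | [], v => by simp [cobs, run]
  | p :: q, v => by
    simp only [cobs, run]
    cases h : G.next v p with
    | none => simp
    | some we => simpa using cobs_isSome_iff q we.1

theorem cobs_of_run : ∀ (q : List ℕ) (v u : V), G.run v q = some u →
    ∃ E : List ℕ, ∀ q', G.cobs col v (q ++ q') =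
      (G.cobs col u q').map (fun r => (E ++ r.1, r.2))
  | [], v, u, h => by
    obtain rfl : v = u := by simpa [run] using h
    refine ⟨[], fun q' => ?_⟩
    cases hq : G.cobs col v q' <;> simp [hq]
  | p :: q, v, u, h => by
    cases hnp : G.next v p with
    | none => simp [run, hnp] at h
    | some we =>
      simp only [run, hnp] at h
      obtain ⟨E, hE⟩ := cobs_of_run q we.1 u h
      refine ⟨we.2 :: E, fun q' => ?_⟩
      simp only [List.cons_append, cobs, hnp]
      cases hq : G.cobs col u q' <;> simp [hE q', hq]

theorem cobs_run_eq {q : List ℕ} {v u : V} (h : G.run v q = some u) :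
    ∃ E : List ℕ, G.cobs col v q = some (E, G.deg u, col u) := by
  obtain ⟨E, hE⟩ := cobs_of_run G col q v u h
  refine ⟨E, ?_⟩
  have := hE []
  simpa [cobs] using this

theorem run_isSome_of_cobs {q : List ℕ} {v : V} (h : (G.cobs col v q).isSome) :
    (G.run v q).isSome := (cobs_isSome_iff G col q v).mp h

theorem sameCView_deg {v w : V} (h : G.SameCView col v w) :
    G.deg v = G.deg w ∧ col v = col w := by
  have := h []
  simp [cobs] at this
  exact this

theorem sameCView_symm {v w : V} (h : G.SameCView col v w) : G.SameCView col w v :=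
  fun q => (h q).symm

theorem sameCView_trans {v w x : V} (h : G.SameCView col v w) (h' : G.SameCView col w x) :
    G.SameCView col v x := fun q => (h q).trans (h' q)

theorem sameCView_run_isSome {v w : V} (h : G.SameCView col v w) {q : List ℕ}
    (hv : (G.run v q).isSome) : (G.run w q).isSome := by
  rw [← cobs_isSome_iff G col, ← h q, cobs_isSome_iff G col]
  exact hv

theorem sameCView_run {v w x y : V} (h : G.SameCView col v w) {q : List ℕ}
    (hv : G.run v q = some x) (hw : G.run w q = some y) : G.SameCView col x y := by
  obtain ⟨E, hE⟩ := cobs_of_run G col q v x hv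
  obtain ⟨F, hF⟩ := cobs_of_run G col q w y hw
  have hEF : E = F := by
    have h0 := h (q ++ [])
    rw [hE [], hF []] at h0
    simp [cobs] at h0
    exact h0.1
  intro q'
  have h1 := h (q ++ q')
  rw [hE q', hF q', hEF] at h1
  cases hx : G.cobs col x q' with
  | none =>
    cases hy : G.cobs col y q' with
    | none => rfl
    | some s => rw [hx, hy] at h1; simp at h1
  | some r =>
    cases hy : G.cobs col y q' with
    | none => rw [hx, hy] at h1; simp at h1
    | some s =>
      rw [hx, hy] at h1
      obtain ⟨r1, r2⟩ := r
      obtain ⟨s1, s2⟩ := s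
      simp only [Option.map_some, Option.some.injEq, Prod.mk.injEq] at h1
      simp [List.append_cancel_left h1.1, h1.2]

theorem sameCView_next {v w x : V} {p e : ℕ} (h : G.SameCView col v w)
    (hv : G.next v p = some (x, e)) : ∃ y, G.next w p = some (y, e) ∧ G.SameCView col x y := by
  have h1 := h [p]
  have hrx : G.run v [p] = some x := by simp [run, hv]
  cases hw : G.next w p with
  | none => simp [cobs, hv, hw] at h1
  | some ye =>
    have h2 : e = ye.2 ∧ G.deg x = G.deg ye.1 ∧ col x = col ye.1 := by
      simpa [cobs, hv, hw] using h1
    refine ⟨ye.1, ?_, ?_⟩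
    · simp [hw, h2.1]
    · exact sameCView_run G col h hrx (by simp [run, hw])

theorem run_reverse (hwf : G.WellFormed) : ∀ (q : List ℕ) (x u : V) (E : List ℕ)
    (d : ℕ) (c : C), G.run x q = some u → G.cobs col x q = some (E, d, c) →
    G.run u E.reverse = some x ∧
      G.cobs col u E.reverse = some (q.reverse, G.deg x, col x)
  | [], x, u, E, d, c, hr, hc => by
    obtain rfl : x = u := by simpa [run] using hr
    have h6 := hc
    simp only [cobs, Option.some.injEq, Prod.mk.injEq] at h6
    obtain ⟨rfl, rfl, rfl⟩ := h6
    simp [run, cobs]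
  | p :: q, x, u, E, d, c, hr, hc => by
    cases hnp : G.next x p with
    | none => simp [run, hnp] at hr
    | some we =>
      obtain ⟨w, e⟩ := we
      simp only [run, hnp] at hr
      simp only [cobs, hnp] at hc
      rw [Option.map_eq_some_iff] at hc
      obtain ⟨⟨E', d', c'⟩, hq, hmk⟩ := hc
      simp only [Prod.mk.injEq] at hmk
      obtain ⟨hE, hd, hcc⟩ := hmk
      have hq' : G.cobs col w q = some (E', d, c) := by rw [hq, hd, hcc]
      obtain ⟨ih1, ih2⟩ := run_reverse hwf q w u E' d c hr hq'
      have hback : G.next w e = some (x, p) := (hwf.2 x p w e hnp).2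
      subst hE
      constructor
      · rw [List.reverse_cons, run_append, ih1]
        simp [run, hback]
      · obtain ⟨F, hF⟩ := cobs_of_run G col E'.reverse u w ih1
        have hF0 : F = q.reverse := by
          have h5 := hF []
          rw [List.append_nil, ih2] at h5
          simp [cobs] at h5
          exact h5.symm
        rw [List.reverse_cons, hF [e], hF0]
        simp [cobs, hback]

end PGraph

/-- The (exit-)port sequence actually used by one step of an agent. -/
def stepPorts {V : Type} (G : PGraph V) (v : V) (o : Option ℕ) : List ℕ :=
  match (moveOf G v o).2 with
  | some pe => [pe.1]
  | none => []

/-- The port sequence actually traversed by agent `a` during the first `t` rounds. -/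
def traceOf {V A M : Type} (G : PGraph V) (start : A → V) (alg : Algo M)
    (r : Run G start alg) (a : A) : ℕ → List ℕ
  | 0 => []
  | t + 1 => traceOf G start alg r a t ++ stepPorts G (r.pos a t) (alg.out (r.mem a t))

theorem run_traceOf {V A M : Type} (G : PGraph V) (start : A → V) (alg : Algo M)
    (r : Run G start alg) (a : A) : ∀ t : ℕ,
    G.run (start a) (traceOf G start alg r a t) = some (r.pos a t)
  | 0 => by simp [traceOf, PGraph.run, r.pos_zero]
  | t + 1 => by
    rw [traceOf, PGraph.run_append, run_traceOf G start alg r a t]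
    simp only [Option.bind_some]
    rw [r.step_pos a t]
    cases ho : alg.out (r.mem a t) with
    | none => simp [stepPorts, moveOf, PGraph.run]
    | some p =>
      cases hnp : G.next (r.pos a t) p with
      | none => simp [stepPorts, moveOf, hnp, PGraph.run]
      | some we => simp [stepPorts, moveOf, hnp, PGraph.run]

/-- if an initial configuration contains two distinct agents with identical
enhanced views, and all agents are woken simultaneously and execute the same
deterministic algorithm, then no agent ever meets any of its homologs (agents whose
enhanced view equals its own); hence the configuration is not gatherable. -/
theorem homologs_never_meet {V A M : Type} [Fintype V] [Fintype A]
    (G : PGraph V) (hwf : G.WellFormed) (hconn : G.Connected)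
    (start : A → V) (occ : V → Bool) (hocc : ∀ v : V, occ v = true ↔ ∃ a : A, start a = v)
    (hhom : ∃ a b : A, a ≠ b ∧ G.SameEView occ (start a) (start b))
    (alg : Algo M) (r : Run G start alg) :
    (∀ (t : ℕ) (a b : A), a ≠ b → G.SameEView occ (start a) (start b) →
        r.pos a t ≠ r.pos b t) ∧
      ¬ ∃ (t : ℕ) (v : V), ∀ a : A, r.pos a t = v := by
  have hsymm : ∀ {x y : A}, G.SameEView occ (start x) (start y) →
      G.SameEView occ (start y) (start x) := fun h q => (h q).symm
  have htr : ∀ (a : A) (t : ℕ),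
      G.run (start a) (traceOf G start alg r a t) = some (r.pos a t) :=
    fun a t => run_traceOf G start alg r a t
  have posView : ∀ {a c : A} (t : ℕ), G.SameEView occ (start a) (start c) →
      traceOf G start alg r a t = traceOf G start alg r c t →
      G.SameCView occ (r.pos a t) (r.pos c t) := by
    intro a c t h htq
    have hc : G.run (start c) (traceOf G start alg r a t) = some (r.pos c t) := by
      rw [htq]; exact htr c t
    exact PGraph.sameCView_run G occ h (htr a t) hc
  have nextNone : ∀ {v w : V} (p : ℕ), G.SameCView occ v w → G.next v p = none →
      G.next w p = none := by
    intro v w p hsv hn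
    have hd := (PGraph.sameCView_deg G occ hsv).1
    by_contra hne
    have h1 : (G.next w p).isSome := Option.ne_none_iff_isSome.mp hne
    have h2 : p < G.deg w := (hwf.1 w p).mp h1
    have h3 : ¬ (G.next v p).isSome := by rw [hn]; simp
    exact h3 ((hwf.1 v p).mpr (hd ▸ h2))
  have traceStepEq : ∀ {a c : A} (t : ℕ), r.mem a t = r.mem c t →
      G.SameCView occ (r.pos a t) (r.pos c t) →
      stepPorts G (r.pos a t) (alg.out (r.mem a t)) =
        stepPorts G (r.pos c t) (alg.out (r.mem c t)) := by
    intro a c t hm hsv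
    rw [← hm]
    cases ho : alg.out (r.mem a t) with
    | none => simp [stepPorts, moveOf]
    | some p =>
      cases hnp : G.next (r.pos a t) p with
      | none =>
        have hnc := nextNone p hsv hnp
        simp [stepPorts, moveOf, hnp, hnc]
      | some we =>
        obtain ⟨y, hy, -⟩ := PGraph.sameCView_next G occ hsv
          (show G.next (r.pos a t) p = some (we.1, we.2) from hnp)
        simp [stepPorts, moveOf, hnp, hy]
  have moveEq : ∀ {a c : A} (t : ℕ), r.mem a t = r.mem c t →
      G.SameCView occ (r.pos a t) (r.pos c t) →
      (moveOf G (r.pos a t) (alg.out (r.mem a t))).2 =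
        (moveOf G (r.pos c t) (alg.out (r.mem c t))).2 := by
    intro a c t hm hsv
    rw [← hm]
    cases ho : alg.out (r.mem a t) with
    | none => simp [moveOf]
    | some p =>
      cases hnp : G.next (r.pos a t) p with
      | none =>
        have hnc := nextNone p hsv hnp
        simp [moveOf, hnp, hnc]
      | some we =>
        obtain ⟨y, hy, -⟩ := PGraph.sameCView_next G occ hsv
          (show G.next (r.pos a t) p = some (we.1, we.2) from hnp)
        simp [moveOf, hnp, hy]
  have key : ∀ (t : ℕ) (a c : A), G.SameEView occ (start a) (start c) →
      r.mem a t = r.mem c t ∧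
        traceOf G start alg r a t = traceOf G start alg r c t := by
    intro t
    induction t with
    | zero =>
      intro a c h
      refine ⟨?_, rfl⟩
      rw [r.mem_zero, r.mem_zero, (PGraph.sameCView_deg G occ h).1]
    | succ t ih =>
      have Tstep : ∀ a c : A, G.SameEView occ (start a) (start c) →
          traceOf G start alg r a (t + 1) = traceOf G start alg r c (t + 1) := by
        intro a c h
        obtain ⟨hm, htq⟩ := ih a c h
        rw [traceOf, traceOf, htq, traceStepEq t hm (posView t h htq)]
      have Pstep : ∀ a c : A, G.SameEView occ (start a) (start c) →
          G.SameCView occ (r.pos a (t + 1)) (r.pos c (t + 1)) :=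
        fun a c h => posView (t + 1) h (Tstep a c h)
      have Nstep : ∀ a c : A, a ≠ c → G.SameEView occ (start a) (start c) →
          r.pos a (t + 1) ≠ r.pos c (t + 1) := by
        intro a c hne h heq
        obtain ⟨E, hE⟩ := PGraph.cobs_run_eq G occ (htr a (t + 1))
        have hE' := (h (traceOf G start alg r a (t + 1))).symm.trans hE
        have hrc : G.run (start c) (traceOf G start alg r a (t + 1)) =
            some (r.pos c (t + 1)) := by rw [Tstep a c h]; exact htr c (t + 1)
        have h2 := PGraph.run_reverse G occ hwf _ _ _ _ _ _ (htr a (t + 1)) hE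
        have h3 := PGraph.run_reverse G occ hwf _ _ _ _ _ _ hrc hE'
        rw [heq] at h2
        exact hne (r.startInj (Option.some.inj (h2.1.symm.trans h3.1)))
      have meetSub : ∀ a c : A, G.SameEView occ (start a) (start c) →
          ∀ m : M, (∃ d, d ≠ a ∧ r.pos d (t + 1) = r.pos a (t + 1) ∧ r.mem d t = m) →
            ∃ d', d' ≠ c ∧ r.pos d' (t + 1) = r.pos c (t + 1) ∧ r.mem d' t = m := by
        rintro a c h m ⟨d, hda, hpd, hmd⟩
        have hruna : G.run (start a) (traceOf G start alg r a (t + 1)) =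
            some (r.pos a (t + 1)) := htr a (t + 1)
        have hrund : G.run (start d) (traceOf G start alg r d (t + 1)) =
            some (r.pos a (t + 1)) := by rw [← hpd]; exact htr d (t + 1)
        obtain ⟨E, hEd⟩ := PGraph.cobs_run_eq G occ hrund
        have hrev := PGraph.run_reverse G occ hwf _ _ _ _ _ _ hrund hEd
        have hfulla : G.run (start a)
            (traceOf G start alg r a (t + 1) ++ E.reverse) = some (start d) := by
          rw [PGraph.run_append, hruna]; exact hrev.1
        have hrunc : G.run (start c) (traceOf G start alg r a (t + 1)) =
            some (r.pos c (t + 1)) := by rw [Tstep a c h]; exact htr c (t + 1)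
        have hPac := Pstep a c h
        have hcobs_uc : G.cobs occ (r.pos c (t + 1)) E.reverse =
            some ((traceOf G start alg r d (t + 1)).reverse,
              G.deg (start d), occ (start d)) := by
          rw [← hPac E.reverse]; exact hrev.2
        have hrs : (G.run (r.pos c (t + 1)) E.reverse).isSome :=
          PGraph.run_isSome_of_cobs G occ (by rw [hcobs_uc]; rfl)
        obtain ⟨s', hs'⟩ := Option.isSome_iff_exists.mp hrs
        have hfullc : G.run (start c)
            (traceOf G start alg r a (t + 1) ++ E.reverse) = some s' := by
          rw [PGraph.run_append, hrunc]; exact hs'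
        have hview_ds' : G.SameCView occ (start d) s' :=
          PGraph.sameCView_run G occ h hfulla hfullc
        have hocc_s' : occ s' = true := by
          rw [← (PGraph.sameCView_deg G occ hview_ds').2]
          exact (hocc (start d)).mpr ⟨d, rfl⟩
        obtain ⟨d', hd'⟩ := (hocc s').mp hocc_s'
        have hHdd' : G.SameEView occ (start d) (start d') := by
          rw [hd']; exact hview_ds'
        have hrev2 := PGraph.run_reverse G occ hwf E.reverse (r.pos c (t + 1)) s'
          (traceOf G start alg r d (t + 1)).reverse
          (G.deg (start d)) (occ (start d)) hs' hcobs_uc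
        have hback : G.run s' (traceOf G start alg r d (t + 1)) =
            some (r.pos c (t + 1)) := by
          have h8 := hrev2.1; rwa [List.reverse_reverse] at h8
        have htrd' : traceOf G start alg r d' (t + 1) =
            traceOf G start alg r d (t + 1) := Tstep d' d (hsymm hHdd')
        have hpd' : r.pos d' (t + 1) = r.pos c (t + 1) := by
          have h9 := htr d' (t + 1)
          rw [htrd', hd'] at h9
          exact Option.some.inj (h9.symm.trans hback)
        refine ⟨d', ?_, hpd', ?_⟩
        · intro hdc
          have hHdc : G.SameEView occ (start d) (start c) := by
            rw [← hdc]; exact hHdd'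
          have hHad : G.SameEView occ (start a) (start d) :=
            PGraph.sameCView_trans G occ h (PGraph.sameCView_symm G occ hHdc)
          exact Nstep a d (Ne.symm hda) hHad hpd.symm
        · rw [← hmd]; exact (ih d' d (hsymm hHdd')).1
      intro a c h
      obtain ⟨hm, htq⟩ := ih a c h
      refine ⟨?_, Tstep a c h⟩
      have hdeg : G.deg (r.pos a (t + 1)) = G.deg (r.pos c (t + 1)) :=
        (PGraph.sameCView_deg G occ (Pstep a c h)).1
      have hmv := moveEq t hm (posView t h htq)
      have hset : {m : M | ∃ b, b ≠ a ∧ r.pos b (t + 1) = r.pos a (t + 1) ∧ r.mem b t = m} =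
          {m : M | ∃ b, b ≠ c ∧ r.pos b (t + 1) = r.pos c (t + 1) ∧ r.mem b t = m} :=
        Set.ext fun m => ⟨fun hm' => meetSub a c h m hm', fun hm' => meetSub c a (hsymm h) m hm'⟩
      rw [r.step_mem a t, r.step_mem c t, hset, hmv, hdeg, hm]
  have neverMeet : ∀ (t : ℕ) (a b : A), a ≠ b → G.SameEView occ (start a) (start b) →
      r.pos a t ≠ r.pos b t := by
    intro t a b hne h heq
    obtain ⟨E, hE⟩ := PGraph.cobs_run_eq G occ (htr a t)
    have hE' := (h (traceOf G start alg r a t)).symm.trans hE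
    have hrb : G.run (start b) (traceOf G start alg r a t) = some (r.pos b t) := by
      rw [(key t a b h).2]; exact htr b t
    have h2 := PGraph.run_reverse G occ hwf _ _ _ _ _ _ (htr a t) hE
    have h3 := PGraph.run_reverse G occ hwf _ _ _ _ _ _ hrb hE'
    rw [heq] at h2
    exact hne (r.startInj (Option.some.inj (h2.1.symm.trans h3.1)))
  refine ⟨neverMeet, ?_⟩
  rintro ⟨t, v, hall⟩
  obtain ⟨a, b, hab, hv⟩ := hhom
  exact neverMeet t a b hab hv ((hall a).trans (hall b).symm)
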